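/- A sum of kernels is a kernel: if K_1 and K_2 are symmetric positive semi-definite functions Z × Z → ℝ, then so is K_1 + K_2; moreover, a pointwise limit of symmetric positive semi-definite functions is symmetric positive semi-definite. Consequently, the Volterra kernel K(z,z') = 1 + Σ_{τ=1}^∞ λ^{2τ} Π_{t=0}^{τ−1} (1 − θ²⟨z_{−t}, z'_{−t}⟩)^{-1}, being a convergent sum of products of positive semi-definite kernels, is itself symmetric and positive semi-definite on K_M. -/

import Mathlib

open scoped RealInnerProductSpace

/-- A symmetric positive semi-definite kernel on a set `Z`. -/
def IsPSDKernel {Z : Type*} (K : Z → Z → ℝ) : Prop :=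
  (∀ z z', K z z' = K z' z) ∧
    ∀ (n : ℕ) (z : Fin n → Z) (α : Fin n → ℝ),
      0 ≤ ∑ i, ∑ j, α i * α j * K (z i) (z j)

lemma psdK_add {Z : Type*} {K₁ K₂ : Z → Z → ℝ} (h₁ : IsPSDKernel K₁) (h₂ : IsPSDKernel K₂) :
    IsPSDKernel fun z z' => K₁ z z' + K₂ z z' := by
  refine ⟨fun z z' => by simp only [h₁.1 z z', h₂.1 z z'], fun n z α => ?_⟩
  have := add_nonneg (h₁.2 n z α) (h₂.2 n z α)
  simpa [mul_add, Finset.sum_add_distrib] using this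

lemma psdK_limit {Z : Type*} {K : ℕ → Z → Z → ℝ} {Klim : Z → Z → ℝ}
    (hK : ∀ m, IsPSDKernel (K m))
    (hlim : ∀ z z', Filter.Tendsto (fun m => K m z z') Filter.atTop (nhds (Klim z z'))) :
    IsPSDKernel Klim := by
  constructor
  · intro z z'
    refine tendsto_nhds_unique (hlim z z') ?_
    have : (fun m => K m z' z) = fun m => K m z z' := by
      funext m; exact ((hK m).1 z z').symm
    simpa [this] using hlim z' z
  · intro n z α
    have h : Filter.Tendsto (fun m => ∑ i, ∑ j, α i * α j * K m (z i) (z j)) Filter.atTop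
        (nhds (∑ i, ∑ j, α i * α j * Klim (z i) (z j))) := by
      refine tendsto_finset_sum _ fun i _ => tendsto_finset_sum _ fun j _ => ?_
      exact (hlim (z i) (z j)).const_mul _
    exact le_of_tendsto_of_tendsto' tendsto_const_nhds h (fun m => (hK m).2 n z α)

lemma psdK_mul {Z : Type*} {K₁ K₂ : Z → Z → ℝ} (h₁ : IsPSDKernel K₁) (h₂ : IsPSDKernel K₂) :
    IsPSDKernel fun z z' => K₁ z z' * K₂ z z' := by
  refine ⟨fun z z' => by simp only [h₁.1 z z', h₂.1 z z'], fun n z α => ?_⟩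
  have hB : Matrix.PosSemidef (Matrix.of fun i j => K₂ (z i) (z j)) := by
    constructor
    · ext i j
      simp [Matrix.conjTranspose_apply, h₂.1 (z j) (z i)]
    · intro x
      have := h₂.2 n z x
      simpa [Matrix.mulVec, dotProduct, Finsupp.sum_fintype, Finset.mul_sum, mul_comm, mul_assoc,
        mul_left_comm] using this
  obtain ⟨m, C, hC⟩ := Matrix.posSemidef_iff_eq_sum_vecMulVec.mp hB
  have hB' : ∀ i j, K₂ (z i) (z j) = ∑ k, C k i * C k j := by
    intro i j
    have := congrFun (congrFun hC i) j
    simpa [Matrix.sum_apply, Matrix.vecMulVec_apply] using this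
  calc (0:ℝ) ≤ ∑ k, ∑ i, ∑ j, (α i * C k i) * (α j * C k j) * K₁ (z i) (z j) :=
        Finset.sum_nonneg fun k _ => h₁.2 n z _
    _ = ∑ i, ∑ j, α i * α j * (K₁ (z i) (z j) * K₂ (z i) (z j)) := by
        rw [Finset.sum_comm]
        refine Finset.sum_congr rfl fun i _ => ?_
        rw [Finset.sum_comm]
        refine Finset.sum_congr rfl fun j _ => ?_
        rw [hB' i j, Finset.mul_sum, Finset.mul_sum]
        exact Finset.sum_congr rfl fun k _ => by ring

lemma psdK_const {Z : Type*} {c : ℝ} (hc : 0 ≤ c) : IsPSDKernel fun _ _ : Z => c := by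
  refine ⟨fun _ _ => rfl, fun n z α => ?_⟩
  have : ∑ i, ∑ j, α i * α j * c = (∑ i, α i) * (∑ j, α j) * c := by
    rw [Finset.sum_mul_sum, Finset.sum_mul]
    exact Finset.sum_congr rfl fun i _ => by rw [Finset.sum_mul]
  rw [this]
  exact mul_nonneg (mul_self_nonneg _) hc

lemma psdK_inner {Z : Type*} {E : Type*} [NormedAddCommGroup E] [InnerProductSpace ℝ E]
    (f : Z → E) : IsPSDKernel fun z z' => ⟪f z, f z'⟫ := by
  refine ⟨fun z z' => real_inner_comm _ _, fun n z α => ?_⟩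
  have : ∑ i, ∑ j, α i * α j * ⟪f (z i), f (z j)⟫ =
      ⟪∑ i, α i • f (z i), ∑ j, α j • f (z j)⟫ := by
    simp only [sum_inner, inner_sum, real_inner_smul_left, real_inner_smul_right,
      Finset.mul_sum, mul_assoc]
    rw [Finset.sum_comm]
    exact Finset.sum_congr rfl fun i _ => Finset.sum_congr rfl fun j _ => by ring
  rw [this]
  exact real_inner_self_nonneg
lemma psdK_sum_range {Z : Type*} {K : ℕ → Z → Z → ℝ} (hK : ∀ k, IsPSDKernel (K k)) (m : ℕ) :
    IsPSDKernel fun z z' => ∑ k ∈ Finset.range m, K k z z' := by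
  induction m with
  | zero => simpa using psdK_const (Z := Z) le_rfl
  | succ m ih =>
      have := psdK_add ih (hK m)
      simpa [Finset.sum_range_succ] using this

lemma psdK_prod_range {Z : Type*} {K : ℕ → Z → Z → ℝ} (hK : ∀ k, IsPSDKernel (K k)) (m : ℕ) :
    IsPSDKernel fun z z' => ∏ k ∈ Finset.range m, K k z z' := by
  induction m with
  | zero => simpa using psdK_const (Z := Z) zero_le_one
  | succ m ih =>
      have := psdK_mul ih (hK m)
      simpa [Finset.prod_range_succ] using this

lemma psdK_pow {Z : Type*} {K : Z → Z → ℝ} (hK : IsPSDKernel K) (k : ℕ) :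
    IsPSDKernel fun z z' => (K z z') ^ k := by
  induction k with
  | zero => simpa using psdK_const (Z := Z) zero_le_one
  | succ k ih =>
      have := psdK_mul ih hK
      simpa [pow_succ] using this

lemma psdK_geom {Z : Type*} {x : Z → Z → ℝ} (hx : IsPSDKernel x) (h : ∀ z z', |x z z'| < 1) :
    IsPSDKernel fun z z' => (1 - x z z')⁻¹ := by
  apply psdK_limit (K := fun m z z' => ∑ k ∈ Finset.range m, (x z z') ^ k)
  · exact fun m => psdK_sum_range (fun k => psdK_pow hx k) m
  · intro z z'
    exact (hasSum_geometric_of_abs_lt_one (h z z')).tendsto_sum_nat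
/-- The Volterra kernel; `z t` stands for the entry `z_{-t}` of a semi-infinite sequence. -/
noncomputable def volterraK (d : ℕ) (θ lam : ℝ) (z z' : ℕ → EuclideanSpace ℝ (Fin d)) : ℝ :=
  1 + ∑' τ : ℕ, lam ^ (2 * (τ + 1)) *
    ∏ t ∈ Finset.range (τ + 1), (1 - θ ^ 2 * ⟪z t, z' t⟫)⁻¹

/-- Sums of kernels are kernels, pointwise limits of kernels are kernels, and consequently
the Volterra kernel is symmetric and positive semi-definite on `K_M`. -/
theorem stmt_16 :
    (∀ (Z : Type) (K₁ K₂ : Z → Z → ℝ), IsPSDKernel K₁ → IsPSDKernel K₂ →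
      IsPSDKernel (fun z z' => K₁ z z' + K₂ z z')) ∧
    (∀ (Z : Type) (K : ℕ → Z → Z → ℝ) (Klim : Z → Z → ℝ),
      (∀ m, IsPSDKernel (K m)) →
      (∀ z z', Filter.Tendsto (fun m => K m z z') Filter.atTop (nhds (Klim z z'))) →
      IsPSDKernel Klim) ∧
    (∀ (d : ℕ) (M θ lam : ℝ), 0 < M → 0 < θ → θ ^ 2 * M ^ 2 < 1 → 0 < lam →
      lam < Real.sqrt (1 - θ ^ 2 * M ^ 2) →
      IsPSDKernel (fun z z' : {z : ℕ → EuclideanSpace ℝ (Fin d) // ∀ t, ‖z t‖ ≤ M} =>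
        volterraK d θ lam z.1 z'.1)) := by
  refine ⟨fun Z K₁ K₂ h₁ h₂ => psdK_add h₁ h₂, fun Z K Klim hK hlim => psdK_limit hK hlim, ?_⟩
  intro d M θ lam hM hθ hθM hlam hlt
  set Z := {z : ℕ → EuclideanSpace ℝ (Fin d) // ∀ t, ‖z t‖ ≤ M} with hZ
  set c : ℝ := θ ^ 2 * M ^ 2 with hcdef
  have hc0 : 0 ≤ c := by positivity
  have hc1 : c < 1 := hθM
  have h1c : 0 < 1 - c := by linarith
  -- the elementary inner-product kernels
  set x : ℕ → Z → Z → ℝ := fun t z z' => θ ^ 2 * ⟪z.1 t, z'.1 t⟫ with hx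
  have hxbound : ∀ (t : ℕ) (z z' : Z), |x t z z'| ≤ c := by
    intro t z z'
    rw [hx]
    simp only
    rw [abs_mul, abs_of_nonneg (by positivity : (0:ℝ) ≤ θ ^ 2)]
    have h1 : |⟪z.1 t, z'.1 t⟫| ≤ ‖z.1 t‖ * ‖z'.1 t‖ := abs_real_inner_le_norm _ _
    have h2 : ‖z.1 t‖ * ‖z'.1 t‖ ≤ M * M :=
      mul_le_mul (z.2 t) (z'.2 t) (norm_nonneg _) (le_of_lt hM)
    calc θ ^ 2 * |⟪z.1 t, z'.1 t⟫| ≤ θ ^ 2 * (M * M) := by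
          exact mul_le_mul_of_nonneg_left (h1.trans h2) (by positivity)
      _ = c := by rw [hcdef]; ring
  have hxpsd : ∀ t, IsPSDKernel (x t) := by
    intro t
    have := psdK_mul (psdK_const (Z := Z) (by positivity : (0:ℝ) ≤ θ ^ 2))
      (psdK_inner (fun z : Z => z.1 t))
    simpa [hx] using this
  -- each geometric factor is a PSD kernel
  have hgeom : ∀ t, IsPSDKernel (fun z z' : Z => (1 - θ ^ 2 * ⟪z.1 t, z'.1 t⟫)⁻¹) := by
    intro t
    exact psdK_geom (hxpsd t) (fun z z' => lt_of_le_of_lt (hxbound t z z') hc1)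
  -- positivity/upper bounds on the factors
  have hfac_pos : ∀ (t : ℕ) (z z' : Z), 0 < 1 - θ ^ 2 * ⟪z.1 t, z'.1 t⟫ := by
    intro t z z'
    have := (abs_le.mp (hxbound t z z')).2
    simp only [hx] at this
    linarith
  have hfac_le : ∀ (t : ℕ) (z z' : Z),
      (1 - θ ^ 2 * ⟪z.1 t, z'.1 t⟫)⁻¹ ≤ (1 - c)⁻¹ := by
    intro t z z'
    apply inv_anti₀ h1c
    have := (abs_le.mp (hxbound t z z')).2
    simp only [hx] at this
    linarith
  -- summability of the series
  set r : ℝ := lam ^ 2 * (1 - c)⁻¹ with hr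
  have hr0 : 0 ≤ r := by positivity
  have hlam2 : lam ^ 2 < 1 - c := by
    have h := Real.sq_sqrt (le_of_lt h1c)
    calc lam ^ 2 < Real.sqrt (1 - c) ^ 2 :=
          pow_lt_pow_left₀ hlt (le_of_lt hlam) (by norm_num)
      _ = 1 - c := h
  have hr1 : r < 1 := by
    rw [hr]
    calc lam ^ 2 * (1 - c)⁻¹ < (1 - c) * (1 - c)⁻¹ :=
          mul_lt_mul_of_pos_right hlam2 (inv_pos.mpr h1c)
      _ = 1 := mul_inv_cancel₀ (ne_of_gt h1c)
  have hsummable : ∀ z z' : Z, Summable (fun τ : ℕ => lam ^ (2 * (τ + 1)) *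
      ∏ t ∈ Finset.range (τ + 1), (1 - θ ^ 2 * ⟪z.1 t, z'.1 t⟫)⁻¹) := by
    intro z z'
    refine Summable.of_nonneg_of_le (fun τ => ?_) (fun τ => ?_)
      ((summable_geometric_of_lt_one hr0 hr1).mul_left r)
    · refine mul_nonneg (by positivity) (Finset.prod_nonneg fun t _ => ?_)
      exact inv_nonneg.mpr (le_of_lt (hfac_pos t z z'))
    · have hprod : ∏ t ∈ Finset.range (τ + 1), (1 - θ ^ 2 * ⟪z.1 t, z'.1 t⟫)⁻¹ ≤
          ∏ t ∈ Finset.range (τ + 1), (1 - c)⁻¹ := by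
        refine Finset.prod_le_prod (fun t _ => ?_) (fun t _ => hfac_le t z z')
        exact inv_nonneg.mpr (le_of_lt (hfac_pos t z z'))
      calc lam ^ (2 * (τ + 1)) * ∏ t ∈ Finset.range (τ + 1), (1 - θ ^ 2 * ⟪z.1 t, z'.1 t⟫)⁻¹
          ≤ lam ^ (2 * (τ + 1)) * ∏ t ∈ Finset.range (τ + 1), (1 - c)⁻¹ :=
            mul_le_mul_of_nonneg_left hprod (by positivity)
        _ = r * r ^ τ := by
            rw [Finset.prod_const, Finset.card_range, hr, pow_mul, mul_pow]
            ring
  -- the approximating kernels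
  apply psdK_limit (K := fun m z z' => 1 + ∑ τ ∈ Finset.range m, lam ^ (2 * (τ + 1)) *
    ∏ t ∈ Finset.range (τ + 1), (1 - θ ^ 2 * ⟪z.1 t, z'.1 t⟫)⁻¹)
  · intro m
    have hterm : ∀ τ : ℕ, IsPSDKernel (fun z z' : Z => lam ^ (2 * (τ + 1)) *
        ∏ t ∈ Finset.range (τ + 1), (1 - θ ^ 2 * ⟪z.1 t, z'.1 t⟫)⁻¹) := by
      intro τ
      exact psdK_mul (psdK_const (by positivity)) (psdK_prod_range (fun t => hgeom t) (τ + 1))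
    have := psdK_add (psdK_const (Z := Z) zero_le_one) (psdK_sum_range hterm m)
    exact this
  · intro z z'
    have := ((hsummable z z').hasSum.tendsto_sum_nat).const_add 1
    simpa [volterraK] using this
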